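/- Let k be a field and x ∈ N. Every finitely generated subfunctor V of the N-module P(x) is finitely presented: if V admits an epimorphism from a finite direct sum of modules P(y_1), …, P(y_r), then V is the cokernel of a morphism between two finite direct sums of modules of the form P(y). (Thus the category algebra kN is locally left coherent, and finitely generated N-submodules of free modules are coherent.) -/

import Mathlib

open CategoryTheory CategoryTheory.Limits

/-- The poset `ℕ →₀ ℕ` of finitely supported sequences of naturals, with pointwise order,
regarded as a thin category. -/
abbrev NPoset := ℕ →₀ ℕ

/-- `P x` is the `k`-linearization of the representable functor `N(x, -)`. -/
noncomputable def Pmod (k : Type) [Field k] (x : NPoset) : NPoset ⥤ ModuleCat k :=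
  coyoneda.obj (Opposite.op x) ⋙ ModuleCat.free k

/-- `Q` is a finite direct sum of modules `P y`. -/
def IsFiniteDirectSumOfP (k : Type) [Field k] (Q : NPoset ⥤ ModuleCat k) : Prop :=
  ∃ (ι : Type) (_ : Fintype ι) (g : ι → NPoset)
    (incl : ∀ j, Pmod k (g j) ⟶ Q), Nonempty (IsColimit (Cofan.mk Q incl))

namespace Stmt7Aux

variable {k : Type} [Field k]



noncomputable def Sl (α : Type) : (α →₀ k) →ₗ[k] k := Finsupp.lsum ℕ fun _ => LinearMap.id

@[simp] lemma Sl_single {α : Type} (f : α) (a : k) : Sl α (Finsupp.single f a) = a := by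
  simp [Sl]

lemma Sl_mapDomain {α β : Type} (q : α → β) (w : α →₀ k) :
    Sl β (Finsupp.mapDomain q w) = Sl α w := by
  classical
  simp only [Sl, Finsupp.lsum_apply, LinearMap.id_coe, id_eq]
  exact Finsupp.sum_mapDomain_index (by simp) (by simp)

lemma eq_single_Sl {α : Type} [Subsingleton α] (f : α) (w : α →₀ k) :
    w = Finsupp.single f (Sl α w) := by
  have h : w = Finsupp.single f (w f) := by
    ext g
    rw [Subsingleton.elim g f, Finsupp.single_eq_same]
  rw [h, Sl_single]

-- check Pmod obj/map definitional shape
example (x z : NPoset) : (Pmod k x).obj z = ModuleCat.of k ((x ⟶ z) →₀ k) := rfl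
example (x z z' : NPoset) (f : z ⟶ z') (w : (x ⟶ z) →₀ k) :
    ((Pmod k x).map f) w = Finsupp.mapDomain (fun g => g ≫ f) w := rfl

noncomputable def elemHom {y : NPoset} {W : NPoset ⥤ ModuleCat k} (w : W.obj y) :
    Pmod k y ⟶ W where
  app z := ModuleCat.ofHom (Finsupp.lift (W.obj z) k (y ⟶ z) (fun f => W.map f w))
  naturality z z' q := by
    refine ModuleCat.hom_ext (Finsupp.lhom_ext fun f a => ?_)
    show (Finsupp.lift (W.obj z') k (y ⟶ z') (fun f => W.map f w))
        (Finsupp.mapDomain (fun g => g ≫ q) (Finsupp.single f a)) = W.map q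
        ((Finsupp.lift (W.obj z) k (y ⟶ z) (fun f => W.map f w)) (Finsupp.single f a))
    rw [Finsupp.mapDomain_single]
    show (Finsupp.single (f ≫ q) a).sum (fun g r => r • W.map g w)
      = W.map q ((Finsupp.single f a).sum (fun g r => r • W.map g w))
    rw [Finsupp.sum_single_index (by simp), Finsupp.sum_single_index (by simp),
      Functor.map_comp, map_smul]
    rfl

@[simp] lemma elemHom_app_single {y : NPoset} {W : NPoset ⥤ ModuleCat k} (w : W.obj y)
    {z : NPoset} (f : y ⟶ z) (a : k) :
    (elemHom w).app z (Finsupp.single f a) = a • W.map f w := by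
  show (Finsupp.single f a).sum (fun g r => r • W.map g w) = a • W.map f w
  rw [Finsupp.sum_single_index (by simp)]

lemma elemHom_app_apply {y : NPoset} {W : NPoset ⥤ ModuleCat k} (w : W.obj y)
    {z : NPoset} (v : (y ⟶ z) →₀ k) :
    (elemHom w).app z v = v.sum (fun g r => r • W.map g w) := rfl

/-- reconstruction: a map out of a representable is `elemHom` of the image of the generator. -/
lemma elemHom_generator {y : NPoset} {W : NPoset ⥤ ModuleCat k} (α : Pmod k y ⟶ W) :
    elemHom (α.app y (Finsupp.single (𝟙 y) 1)) = α := by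
  ext z : 2
  refine ModuleCat.hom_ext (Finsupp.lhom_ext fun f a => ?_)
  erw [elemHom_app_single]
  have h1 : (Finsupp.single f a : (y ⟶ z) →₀ k)
      = (Pmod k y).map f (Finsupp.single (𝟙 y) a) := by
    show _ = Finsupp.mapDomain (fun g => g ≫ f) (Finsupp.single (𝟙 y) a)
    rw [Finsupp.mapDomain_single, Category.id_comp]
  rw [h1]
  have h2 := congrFun (congrArg (fun (m : _ ⟶ _) => (m : _ → _))
    (α.naturality f)) (Finsupp.single (𝟙 y) a)
  have h3 : (Finsupp.single (𝟙 y) a : (y ⟶ y) →₀ k) = a • Finsupp.single (𝟙 y) 1 := by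
    rw [Finsupp.smul_single, smul_eq_mul, mul_one]
  calc a • W.map f (α.app y (Finsupp.single (𝟙 y) 1))
      = W.map f (α.app y (Finsupp.single (𝟙 y) a)) := by
        rw [h3]
        erw [map_smul, map_smul]
    _ = α.app z ((Pmod k y).map f (Finsupp.single (𝟙 y) a)) := h2.symm

lemma elemHom_comp {y : NPoset} {W W' : NPoset ⥤ ModuleCat k} (w : W.obj y) (β : W ⟶ W') :
    elemHom w ≫ β = elemHom (β.app y w) := by
  ext z : 2
  refine ModuleCat.hom_ext (Finsupp.lhom_ext fun f a => ?_)
  show β.app z ((elemHom w).app z (Finsupp.single f a)) = _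
  erw [elemHom_app_single, elemHom_app_single]
  rw [map_smul]
  have h2 := congrFun (congrArg (fun (m : _ ⟶ _) => (m : _ → _)) (β.naturality f)) w
  exact congrArg _ h2




/-- Explicit finite direct sum of representables. -/
@[reducible] noncomputable def Dfun (k : Type) [Field k] {κ : Type} (h : κ → NPoset) :
    NPoset ⥤ ModuleCat k where
  obj z := ModuleCat.of k (∀ a, (h a ⟶ z) →₀ k)
  map {z z'} f := ModuleCat.ofHom (LinearMap.pi (fun a =>
    (Finsupp.lmapDomain k k (fun q => q ≫ f)).comp (LinearMap.proj a)))
  map_id z := by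
    refine ModuleCat.hom_ext (LinearMap.ext fun v => funext fun a => ?_)
    show Finsupp.mapDomain (fun q => q ≫ 𝟙 z) (v a) = v a
    simp only [Category.comp_id]
    exact Finsupp.mapDomain_id
  map_comp {z z' z''} f f' := by
    refine ModuleCat.hom_ext (LinearMap.ext fun v => funext fun a => ?_)
    show Finsupp.mapDomain (fun q => q ≫ (f ≫ f')) (v a)
      = Finsupp.mapDomain (fun q => q ≫ f') (Finsupp.mapDomain (fun q => q ≫ f) (v a))
    rw [← Finsupp.mapDomain_comp]
    rfl

lemma Dfun_map_apply {κ : Type} (h : κ → NPoset) {z z' : NPoset} (f : z ⟶ z')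
    (v : ∀ a, (h a ⟶ z) →₀ k) (a : κ) :
    ((Dfun k h).map f v) a = Finsupp.mapDomain (fun q => q ≫ f) (v a) := rfl

noncomputable def Dincl {κ : Type} [DecidableEq κ] (h : κ → NPoset) (a : κ) :
    Pmod k (h a) ⟶ Dfun k h where
  app z := ModuleCat.ofHom (LinearMap.single k (fun b => (h b ⟶ z) →₀ k) a)
  naturality z z' f := by
    refine ModuleCat.hom_ext (LinearMap.ext fun (w : (h a ⟶ z) →₀ k) => funext fun b => ?_)
    dsimp [Dfun, Pmod]
    show Pi.single (M := fun b => (h b ⟶ z') →₀ k) a (Finsupp.mapDomain (fun q => q ≫ f) w) b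
      = Finsupp.mapDomain (fun q => q ≫ f) (Pi.single (M := fun b => (h b ⟶ z) →₀ k) a w b)
    by_cases hb : b = a
    · subst hb; rw [Pi.single_eq_same, Pi.single_eq_same]
    · rw [Pi.single_eq_of_ne hb, Pi.single_eq_of_ne hb, Finsupp.mapDomain_zero]

variable {κ : Type} [DecidableEq κ] (h : κ → NPoset)

/-- Descent from the explicit direct sum. -/
noncomputable def natDesc [Fintype κ] {W : NPoset ⥤ ModuleCat k}
    (β : ∀ a, Pmod k (h a) ⟶ W) : Dfun k h ⟶ W where
  app z := ModuleCat.ofHom (∑ a, ((β a).app z).hom.comp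
    (LinearMap.proj (φ := fun b => (h b ⟶ z) →₀ k) a))
  naturality z z' f := by
    refine ModuleCat.hom_ext (LinearMap.ext fun (v : ∀ a, (h a ⟶ z) →₀ k) => ?_)
    show (∑ a, ((β a).app z').hom.comp (LinearMap.proj (φ := fun b => (h b ⟶ z') →₀ k) a))
        ((Dfun k h).map f v)
      = W.map f ((∑ a, ((β a).app z).hom.comp
        (LinearMap.proj (φ := fun b => (h b ⟶ z) →₀ k) a)) v)
    rw [LinearMap.sum_apply, LinearMap.sum_apply, map_sum]
    refine Finset.sum_congr rfl fun a _ => ?_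
    show (β a).app z' (((Dfun k h).map f v) a) = W.map f ((β a).app z (v a))
    rw [Dfun_map_apply]
    have h2 := congrFun (congrArg (fun (m : _ ⟶ _) => (m : _ → _))
      ((β a).naturality f)) (v a)
    exact h2

lemma natDesc_app [Fintype κ] {W : NPoset ⥤ ModuleCat k}
    (β : ∀ a, Pmod k (h a) ⟶ W) (z : NPoset) (v : ∀ a, (h a ⟶ z) →₀ k) :
    (natDesc h β).app z v = ∑ a, (β a).app z (v a) := by
  show (∑ a, ((β a).app z).hom.comp (LinearMap.proj (φ := fun b => (h b ⟶ z) →₀ k) a)) v = _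
  rw [LinearMap.sum_apply]
  rfl

lemma Dincl_app {z : NPoset} (a : κ) (w : (h a ⟶ z) →₀ k) :
    (Dincl h a).app z w = Pi.single a w := rfl

lemma natDesc_fac [Fintype κ] {W : NPoset ⥤ ModuleCat k}
    (β : ∀ a, Pmod k (h a) ⟶ W) (a : κ) :
    Dincl h a ≫ natDesc h β = β a := by
  ext z : 2
  refine ModuleCat.hom_ext <| LinearMap.ext fun (w : (h a ⟶ z) →₀ k) => ?_
  show (natDesc h β).app z ((Dincl h a).app z w) = (β a).app z w
  rw [Dincl_app, natDesc_app]
  rw [Finset.sum_eq_single_of_mem a (Finset.mem_univ a)]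
  · rw [Pi.single_eq_same]
  · intro b _ hb
    erw [Pi.single_eq_of_ne hb, map_zero]

lemma natDesc_uniq [Fintype κ] {W : NPoset ⥤ ModuleCat k}
    (β : ∀ a, Pmod k (h a) ⟶ W) (m : Dfun k h ⟶ W)
    (hm : ∀ a, Dincl h a ≫ m = β a) : m = natDesc h β := by
  ext z : 2
  refine ModuleCat.hom_ext <| LinearMap.ext fun (v : ∀ a, (h a ⟶ z) →₀ k) => ?_
  show m.app z v = (natDesc h β).app z v
  rw [natDesc_app]
  have hv : v = ∑ a, Pi.single a (v a) := by
    exact (Finset.univ_sum_single v).symm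
  calc m.app z v = m.app z (∑ a, Pi.single a (v a)) := by rw [← hv]
    _ = ∑ a, m.app z (Pi.single a (v a)) := map_sum _ _ _
    _ = ∑ a, (β a).app z (v a) := by
        refine Finset.sum_congr rfl fun a _ => ?_
        have := congrFun (congrArg (fun (t : Pmod k (h a) ⟶ W) => ((t.app z).hom : _ → _)) (hm a)) (v a)
        exact this

noncomputable def DfunIsColimit [Fintype κ] :
    IsColimit (Cofan.mk (Dfun k h) (fun a => Dincl h a)) :=
  mkCofanColimit _ (fun t => natDesc h (fun a => t.inj a))
    (fun t a => natDesc_fac h _ a)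
    (fun t m hm => natDesc_uniq h _ m hm)


lemma natDesc_comp [Fintype κ] {W W' : NPoset ⥤ ModuleCat k}
    (β : ∀ a, Pmod k (h a) ⟶ W) (α : W ⟶ W') :
    natDesc h β ≫ α = natDesc h (fun a => β a ≫ α) :=
  natDesc_uniq h _ _ (fun a => by rw [← Category.assoc, natDesc_fac])

lemma Dfun_map_pi_single {z z' : NPoset} (f : z ⟶ z') (i : κ) (q : h i ⟶ z) (b : k) :
    (Dfun k h).map f (Pi.single (M := fun b' => (h b' ⟶ z) →₀ k) i (Finsupp.single q b))
      = Pi.single (M := fun b' => (h b' ⟶ z') →₀ k) i (Finsupp.single (q ≫ f) b) := by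
  funext b'
  rw [Dfun_map_apply]
  by_cases hb : b' = i
  · subst hb
    rw [Pi.single_eq_same, Pi.single_eq_same, Finsupp.mapDomain_single]
  · rw [Pi.single_eq_of_ne hb, Pi.single_eq_of_ne hb, Finsupp.mapDomain_zero]

lemma elemHom_zero_app {y : NPoset} {W : NPoset ⥤ ModuleCat k} {z : NPoset}
    (u : (y ⟶ z) →₀ k) : (elemHom (0 : W.obj y)).app z u = 0 := by
  rw [elemHom_app_apply]
  simp

/-- The "total coefficient" functional on the direct sum, with weights `c`. -/
noncomputable def sigma [Fintype κ] (c : κ → k) (z : NPoset) :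
    (∀ a, (h a ⟶ z) →₀ k) →ₗ[k] k :=
  ∑ a, c a • ((Sl (h a ⟶ z)).comp (LinearMap.proj a))

lemma sigma_apply [Fintype κ] (c : κ → k) (z : NPoset) (v : ∀ a, (h a ⟶ z) →₀ k) :
    sigma h c z v = ∑ a, c a * Sl (h a ⟶ z) (v a) := by
  rw [sigma, LinearMap.sum_apply]
  refine Finset.sum_congr rfl fun a _ => ?_
  rw [LinearMap.smul_apply, smul_eq_mul]
  rfl

lemma sigma_pi_single [Fintype κ] (c : κ → k) (z : NPoset) (i : κ) (w : (h i ⟶ z) →₀ k) :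
    sigma h c z (Pi.single (M := fun b' => (h b' ⟶ z) →₀ k) i w) = c i * Sl _ w := by
  rw [sigma_apply, Finset.sum_eq_single_of_mem i (Finset.mem_univ i)]
  · rw [Pi.single_eq_same]
  · intro b _ hb
    rw [Pi.single_eq_of_ne hb, map_zero, mul_zero]

lemma sigma_mapDomain [Fintype κ] (c : κ → k) {z z' : NPoset} (f : z ⟶ z')
    (v : ∀ a, (h a ⟶ z) →₀ k) :
    sigma h c z' ((Dfun k h).map f v) = sigma h c z v := by
  rw [sigma_apply h c z' ((Dfun k h).map f v), sigma_apply]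
  refine Finset.sum_congr rfl fun a _ => ?_
  rw [Dfun_map_apply, Sl_mapDomain]

/-- `sigma` of an `elemHom` applied value. -/
lemma sigma_elemHom [Fintype κ] (c : κ → k) {y z : NPoset}
    (w : (Dfun k h).obj y) (u : (y ⟶ z) →₀ k) :
    sigma h c z ((elemHom w).app z u) = Sl _ u * sigma h c y w := by
  rw [elemHom_app_apply, map_finsuppSum]
  rw [show (Sl (y ⟶ z)) u = u.sum fun _ a => a from rfl, Finsupp.sum_mul]
  refine Finsupp.sum_congr fun f _ => ?_
  rw [map_smul, smul_eq_mul]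
  congr 1
  exact sigma_mapDomain h c f w


lemma Sl_elemHom {x y z : NPoset} (w : (Pmod k x).obj y) (u : (y ⟶ z) →₀ k) :
    Sl (x ⟶ z) ((elemHom (W := Pmod k x) w).app z u)
      = Sl (y ⟶ z) u * Sl (x ⟶ y) w := by
  erw [elemHom_app_apply, map_finsuppSum]
  rw [show (Sl (y ⟶ z)) u = u.sum fun _ a => a from rfl, Finsupp.sum_mul]
  refine Finsupp.sum_congr fun f _ => ?_
  erw [map_smul, smul_eq_mul]
  congr 1
  exact Sl_mapDomain _ w


end Stmt7Aux

open Stmt7Aux in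
/-- Over a field `k`, every finitely generated subfunctor `V` of `P x` is finitely presented:
if `V` admits an epimorphism from a finite direct sum of representables, then `V` is the
cokernel of a morphism between two finite direct sums of representables. -/
theorem stmt7 {k : Type} [Field k] (x : NPoset) (V : NPoset ⥤ ModuleCat k)
    (ν : V ⟶ Pmod k x) (hmono : ∀ z : NPoset, Function.Injective (ν.app z))
    (F : NPoset ⥤ ModuleCat k) (hF : IsFiniteDirectSumOfP k F) (e : F ⟶ V)
    (he : ∀ z : NPoset, Function.Surjective (e.app z)) :
    ∃ (Q1 Q0 : NPoset ⥤ ModuleCat k) (d : Q1 ⟶ Q0) (p : Q0 ⟶ V),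
      IsFiniteDirectSumOfP k Q1 ∧ IsFiniteDirectSumOfP k Q0 ∧
      (∀ z : NPoset, Function.Surjective (p.app z)) ∧
      (∀ z : NPoset, Function.Exact (d.app z) (p.app z)) := by
  classical
  obtain ⟨ι, iFin, g, incl, ⟨hcol⟩⟩ := hF
  haveI := iFin
  -- generators and scalars
  set γ : ∀ j, Pmod k (g j) ⟶ V := fun j => incl j ≫ e with hγ
  set vP : ∀ j, (x ⟶ g j) →₀ k :=
    fun j => (ν.app (g j)) ((γ j).app (g j) (Finsupp.single (𝟙 (g j)) 1)) with hvP
  set c : ι → k := fun j => Sl (x ⟶ g j) (vP j) with hc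
  -- index type for relations
  set h : (ι × ι) ⊕ ι → NPoset := Sum.elim (fun ij => g ij.1 ⊔ g ij.2) g with hh
  -- relation elements in the degree-0 part
  set r : ∀ a : (ι × ι) ⊕ ι, (Dfun k g).obj (h a) := fun a =>
    match a with
    | .inl ij => c ij.2 • Pi.single (M := fun b => (g b ⟶ g ij.1 ⊔ g ij.2) →₀ k) ij.1
          (Finsupp.single (homOfLE le_sup_left) 1)
        - c ij.1 • Pi.single (M := fun b => (g b ⟶ g ij.1 ⊔ g ij.2) →₀ k) ij.2
          (Finsupp.single (homOfLE le_sup_right) 1)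
    | .inr j => if c j = 0 then
          Pi.single (M := fun b => (g b ⟶ g j) →₀ k) j (Finsupp.single (𝟙 (g j)) 1)
        else 0
    with hr
  set d : Dfun k h ⟶ Dfun k g := natDesc h (fun a => elemHom (r a)) with hd
  set p : Dfun k g ⟶ V := natDesc g γ with hp
  -- the elemHom description of the generators mapped into P x
  have hγν : ∀ j, γ j ≫ ν = elemHom (vP j) := by
    intro j
    rw [hvP]
    exact (elemHom_generator (γ j ≫ ν)).symm
  -- key : applying ν to p
  have hpν : p ≫ ν = natDesc g (fun j => elemHom (vP j)) := by
    rw [hp, natDesc_comp]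
    exact congrArg _ (funext hγν)
  -- sigma of each relation vanishes
  have hσr : ∀ a, sigma g c (h a) (r a) = 0 := by
    intro a
    match a with
    | .inl ij =>
        show sigma g c (g ij.1 ⊔ g ij.2) _ = 0
        rw [hr]
        rw [map_sub, map_smul, map_smul, sigma_pi_single, sigma_pi_single,
          Sl_single, Sl_single]
        simp [smul_eq_mul, mul_comm]
    | .inr j =>
        show sigma g c (g j) _ = 0
        rw [hr]
        dsimp only
        by_cases hcj : c j = 0
        · erw [if_pos hcj, sigma_pi_single, Sl_single, hcj, zero_mul]
        · erw [if_neg hcj, map_zero]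

  -- identify `p` with `θ.hom ≫ e`
  have hθ : ∀ j, Dincl g j ≫ (IsColimit.coconePointUniqueUpToIso (DfunIsColimit g) hcol).hom
      = incl j := fun j =>
    IsColimit.comp_coconePointUniqueUpToIso_hom (DfunIsColimit g) hcol ⟨j⟩
  set θ := IsColimit.coconePointUniqueUpToIso (DfunIsColimit g) hcol with hθdef
  have hpe : θ.hom ≫ e = p := by
    refine Cofan.IsColimit.hom_ext (DfunIsColimit g) _ _ fun j => ?_
    have h1 : (Cofan.mk (Dfun k g) (fun a => Dincl g a)).inj j = Dincl g j := rfl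
    rw [h1, ← Category.assoc, hθ j, hp, natDesc_fac]
  refine ⟨Dfun k h, Dfun k g, d, p,
    ⟨(ι × ι) ⊕ ι, inferInstance, h, fun a => Dincl h a, ⟨DfunIsColimit h⟩⟩,
    ⟨ι, iFin, g, fun j => Dincl g j, ⟨DfunIsColimit g⟩⟩, ?_, ?_⟩
  · -- surjectivity of `p`
    intro z u
    obtain ⟨w, hw⟩ := he z u
    refine ⟨θ.inv.app z w, ?_⟩
    rw [← hpe]
    show e.app z (θ.hom.app z (θ.inv.app z w)) = u
    have h2 := congrFun (congrArg (fun (t : F.obj z ⟶ F.obj z) =>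
      (t.hom : _ → _)) (θ.inv_hom_id_app z)) w
    have h3 : θ.hom.app z (θ.inv.app z w) = w := h2
    rw [h3, hw]
  · -- exactness
    intro z
    -- description of `ν ∘ p` pointwise
    have hψ : ∀ v, ν.app z (p.app z v)
        = ∑ j, (elemHom (W := Pmod k x) (vP j)).app z (v j) := by
      intro v
      show (p ≫ ν).app z v = _
      rw [hpν, natDesc_app]
    -- the coefficient functional detects vanishing
    have hSl : ∀ v, Sl (x ⟶ z) (∑ j, (elemHom (W := Pmod k x) (vP j)).app z (v j))
        = sigma g c z v := by
      intro v
      erw [map_sum, sigma_apply]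
      refine Finset.sum_congr rfl fun j _ => ?_
      rw [Sl_elemHom, mul_comm]
    have hker : ∀ v, p.app z v = 0 ↔ sigma g c z v = 0 := by
      intro v
      constructor
      · intro hv
        erw [← hSl v, ← hψ v, hv, map_zero, map_zero]
      · intro hv
        apply hmono z
        rw [map_zero]
        by_cases hxz : Nonempty (x ⟶ z)
        · erw [hψ v, eq_single_Sl hxz.some (∑ j, (elemHom (W := Pmod k x) (vP j)).app z (v j)),
            hSl v, hv, Finsupp.single_zero]
          rfl
        · exact Finsupp.ext fun f => (hxz ⟨f⟩).elim
    -- description of `d` pointwise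
    have hdapp : ∀ u, d.app z u = ∑ a, (elemHom (r a)).app z (u a) := by
      intro u
      rw [hd, natDesc_app]
    -- range of d = kernel of sigma
    have hrange : ∀ v : ∀ j, (g j ⟶ z) →₀ k, sigma g c z v = 0 ↔
        v ∈ Set.range (d.app z) := by
      intro v
      constructor
      · -- construct a preimage
        intro hσv
        have hσv' : ∑ j, c j * Sl (g j ⟶ z) (v j) = 0 := by
          rw [← sigma_apply g c z v]; exact hσv
        by_cases hex : ∃ j0, c j0 ≠ 0 ∧ Nonempty (g j0 ⟶ z)
        · obtain ⟨j0, hc0, hne0⟩ := hex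
          obtain ⟨f0⟩ := hne0
          set e0 : ∀ j, (g j ⟶ z) →₀ k :=
            Pi.single (M := fun b => (g b ⟶ z) →₀ k) j0 (Finsupp.single f0 1) with he0
          set u : ∀ a, (h a ⟶ z) →₀ k := fun a =>
            match a with
            | .inl ij => if hij : ij.1 = j0 ∧ c ij.2 ≠ 0 ∧ Nonempty (g ij.2 ⟶ z) then
                Finsupp.single (homOfLE (sup_le
                    (le_trans (le_of_eq (congrArg g hij.1)) (leOfHom f0))
                    (leOfHom hij.2.2.some)))
                  (-(Sl (g ij.2 ⟶ z) (v ij.2) / c j0))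
              else 0
            | .inr j => if c j = 0 then v j else 0
            with hu
          refine ⟨u, ?_⟩
          rw [hdapp u, Fintype.sum_sum_type]
          have hinl : (∑ ij : ι × ι, (elemHom (r (Sum.inl ij))).app z (u (Sum.inl ij)))
              = ∑ j, (elemHom (r (Sum.inl (j0, j)))).app z (u (Sum.inl (j0, j))) := by
            rw [Fintype.sum_prod_type]
            refine Finset.sum_eq_single_of_mem j0 (Finset.mem_univ j0) fun i _ hi => ?_
            refine Finset.sum_eq_zero fun j _ => ?_
            have hu0 : u (Sum.inl (i, j)) = 0 := by
              show (if hij : (i, j).1 = j0 ∧ c (i, j).2 ≠ 0 ∧ Nonempty (g (i, j).2 ⟶ z)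
                then _ else 0) = 0
              rw [dif_neg (fun hij => hi hij.1)]
            erw [hu0, map_zero]
          rw [hinl, ← Finset.sum_add_distrib]
          have hterm : ∀ j, (elemHom (r (Sum.inl (j0, j)))).app z (u (Sum.inl (j0, j)))
              + (elemHom (r (Sum.inr j))).app z (u (Sum.inr j))
              = Pi.single (M := fun b => (g b ⟶ z) →₀ k) j (v j)
                - ((c j * Sl (g j ⟶ z) (v j)) / c j0) • e0 := by
            intro j
            by_cases hcj : c j = 0
            · -- generator with zero scalar : use the `inr` relation
              have hA : u (Sum.inl (j0, j)) = 0 := by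
                show (if hij : (j0, j).1 = j0 ∧ c (j0, j).2 ≠ 0 ∧ Nonempty (g (j0, j).2 ⟶ z)
                  then _ else 0) = 0
                rw [dif_neg (fun hij => hij.2.1 hcj)]
              have hB : u (Sum.inr j) = v j := by
                show (if c j = 0 then v j else 0) = v j
                rw [if_pos hcj]
              have hr2 : r (Sum.inr j) = Pi.single (M := fun b => (g b ⟶ g j) →₀ k) j
                  (Finsupp.single (𝟙 (g j)) 1) := by
                rw [hr]; dsimp only; erw [if_pos hcj]
              have hDj : elemHom (Pi.single (M := fun b => (g b ⟶ g j) →₀ k) j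
                  (Finsupp.single (𝟙 (g j)) 1)) = Dincl g j := by
                have := elemHom_generator (W := Dfun k g) (Dincl g j)
                rw [← this]
                rfl
              have hDapp : (Dincl g j).app z (v j)
                  = Pi.single (M := fun b => (g b ⟶ z) →₀ k) j (v j) := rfl
              erw [hA, map_zero, hB, hr2, hDj, zero_add]
              erw [hDapp]
              rw [hcj, zero_mul, zero_div, zero_smul, sub_zero]
            · by_cases hjz : Nonempty (g j ⟶ z)
              · -- main case
                have hB : u (Sum.inr j) = 0 := by
                  show (if c j = 0 then v j else 0) = 0
                  rw [if_neg hcj]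
                have hcond : (j0, j).1 = j0 ∧ c (j0, j).2 ≠ 0 ∧ Nonempty (g (j0, j).2 ⟶ z) :=
                  ⟨rfl, hcj, hjz⟩
                set f1 : (g j0 ⊔ g j) ⟶ z := homOfLE (sup_le
                    (le_trans (le_of_eq (congrArg g hcond.1)) (leOfHom f0))
                    (leOfHom hcond.2.2.some)) with hf1
                have hA : u (Sum.inl (j0, j)) =
                    Finsupp.single f1 (-(Sl (g j ⟶ z) (v j) / c j0)) := by
                  show (if hij : (j0, j).1 = j0 ∧ c (j0, j).2 ≠ 0 ∧ Nonempty (g (j0, j).2 ⟶ z)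
                    then Finsupp.single (homOfLE (sup_le
                      (le_trans (le_of_eq (congrArg g hij.1)) (leOfHom f0))
                      (leOfHom hij.2.2.some))) (-(Sl (g (j0, j).2 ⟶ z) (v (j0, j).2) / c j0))
                    else 0) = _
                  rw [dif_pos hcond]
                have hr1 : r (Sum.inl (j0, j)) =
                    c j • Pi.single (M := fun b => (g b ⟶ g j0 ⊔ g j) →₀ k) j0
                      (Finsupp.single (homOfLE le_sup_left) 1)
                    - c j0 • Pi.single (M := fun b => (g b ⟶ g j0 ⊔ g j) →₀ k) j
                      (Finsupp.single (homOfLE le_sup_right) 1) := by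
                  rw [hr]
                set fj : g j ⟶ z := homOfLE le_sup_right ≫ f1 with hfj
                have hmap : (Dfun k g).map f1 (r (Sum.inl (j0, j)))
                    = c j • Pi.single (M := fun b => (g b ⟶ z) →₀ k) j0 (Finsupp.single f0 1)
                    - c j0 • Pi.single (M := fun b => (g b ⟶ z) →₀ k) j
                        (Finsupp.single fj 1) := by
                  rw [hr1, map_sub, map_smul, map_smul, Dfun_map_pi_single, Dfun_map_pi_single]
                  rw [Subsingleton.elim (homOfLE le_sup_left ≫ f1) f0]
                have hvj : Pi.single (M := fun b => (g b ⟶ z) →₀ k) j (v j)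
                    = Sl (g j ⟶ z) (v j) • Pi.single (M := fun b => (g b ⟶ z) →₀ k) j
                        (Finsupp.single fj 1) := by
                  rw [← Pi.single_smul, Finsupp.smul_single, smul_eq_mul, mul_one]
                  rw [← eq_single_Sl fj (v j)]
                erw [hA, hB, map_zero, add_zero]
                erw [elemHom_app_single]
                erw [hmap]
                rw [hvj, he0]
                match_scalars <;> field_simp <;> try exact Or.inl (mul_comm _ _)
              · -- no map from g j to z : everything vanishes
                have hA : u (Sum.inl (j0, j)) = 0 := by
                  show (if hij : (j0, j).1 = j0 ∧ c (j0, j).2 ≠ 0 ∧ Nonempty (g (j0, j).2 ⟶ z)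
                    then _ else 0) = 0
                  rw [dif_neg (fun hij => hjz hij.2.2)]
                have hB : u (Sum.inr j) = 0 := by
                  show (if c j = 0 then v j else 0) = 0
                  rw [if_neg hcj]
                have hvj : v j = 0 := Finsupp.ext fun f => (hjz ⟨f⟩).elim
                erw [hA, hB, map_zero, add_zero, hvj, Pi.single_zero, map_zero,
                  mul_zero, zero_div, zero_smul, sub_zero]
          rw [Finset.sum_congr rfl (fun j _ => hterm j), Finset.sum_sub_distrib,
            ← Finset.sum_smul, ← Finset.sum_div]
          have : (∑ j, c j * Sl (g j ⟶ z) (v j)) = 0 := hσv'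
          rw [this, zero_div, zero_smul, sub_zero]
          exact Finset.univ_sum_single v
        · -- all reachable scalars vanish
          push_neg at hex
          set u : ∀ a, (h a ⟶ z) →₀ k := fun a =>
            match a with
            | .inl _ => 0
            | .inr j => v j
            with hu
          refine ⟨u, ?_⟩
          rw [hdapp u, Fintype.sum_sum_type]
          have hinl : (∑ ij : ι × ι, (elemHom (r (Sum.inl ij))).app z (u (Sum.inl ij))) = 0 :=
            Finset.sum_eq_zero fun ij _ => by
              show (elemHom (r (Sum.inl ij))).app z 0 = 0
              rw [map_zero]
          rw [hinl, zero_add]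
          have hterm : ∀ j, (elemHom (r (Sum.inr j))).app z (u (Sum.inr j))
              = Pi.single (M := fun b => (g b ⟶ z) →₀ k) j (v j) := by
            intro j
            show (elemHom (r (Sum.inr j))).app z (v j) = _
            by_cases hcj : c j = 0
            · have hr2 : r (Sum.inr j) = Pi.single (M := fun b => (g b ⟶ g j) →₀ k) j
                  (Finsupp.single (𝟙 (g j)) 1) := by
                rw [hr]; dsimp only; erw [if_pos hcj]
              have hDj : elemHom (Pi.single (M := fun b => (g b ⟶ g j) →₀ k) j
                  (Finsupp.single (𝟙 (g j)) 1)) = Dincl g j := by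
                have := elemHom_generator (W := Dfun k g) (Dincl g j)
                rw [← this]
                rfl
              have hDapp : (Dincl g j).app z (v j)
                  = Pi.single (M := fun b => (g b ⟶ z) →₀ k) j (v j) := rfl
              erw [hr2, hDj]
              erw [hDapp]
            · have hvj : v j = 0 := Finsupp.ext fun f => (hex j hcj).elim f
              have hr2 : r (Sum.inr j) = 0 := by
                rw [hr]; dsimp only; erw [if_neg hcj]
              erw [hvj, map_zero, Pi.single_zero]
          rw [Finset.sum_congr rfl (fun j _ => hterm j)]
          exact Finset.univ_sum_single v
      · -- sigma vanishes on the image of d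
        rintro ⟨u, rfl⟩
        rw [hdapp u, map_sum]
        refine Finset.sum_eq_zero fun a _ => ?_
        rw [sigma_elemHom, hσr a, mul_zero]
    intro v
    rw [hker v, hrange v]
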